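/- Let σ = {v₁,…,v_t} be a chain in V(m,n,k), let w = x₁∧…∧x_k with x_i = Σ_{j=1}^{n} α_{ij} e_j for indeterminates α_{ij}, and for s = 1,…,t let A_s(α_{ij}) denote the polynomial (wᵐ, v_s) in the variables α_{ij} (a homogeneous polynomial of degree mk). Then dim(V₀(m,n,k) ∩ L(σ)) = r(σ), where r(σ) is the maximal number of linearly independent polynomials among A₁,…,A_t. -/

import Mathlib

open scoped BigOperators

/-- The index set `Π` of strictly increasing `k`-tuples from `{1,…,n}`,
realized as `k`-element subsets of `Fin n`. -/
abbrev PIdx (n k : ℕ) : Type := {s : Finset (Fin n) // s.card = k}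

/-- The strictly increasing tuple `(i₁ < … < i_k)` enumerating `α ∈ Π`. -/
noncomputable def toTuple {n k : ℕ} (α : PIdx n k) : Fin k → Fin n :=
  fun j => (α.1.orderIsoOfFin α.2 j : Fin n)

/-- Coordinates of the decomposable vector `x₁ ∧ … ∧ x_k` in the standard basis
`{e_α : α ∈ Π}` of `Λᵏℝⁿ`:  the `α`-coordinate is the `k × k` minor of the matrix
whose rows are the `xᵢ`, taken on the columns listed by `α`. -/
noncomputable def wedgeCoords {R : Type} [CommRing R] {n k : ℕ} (x : Fin k → Fin n → R) :
    PIdx n k → R :=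
  fun α => Matrix.det (Matrix.of fun i j => x i (toTuple α j))

/-- The model of `Λᵏℝⁿ` inside polynomials: a vector `w = Σ w_α e_α` is sent to the
linear polynomial `Σ_α w_α • X_α`.  The `m`-th symmetric power `Sᵐ(Λᵏℝⁿ)` is then the
space of homogeneous polynomials of degree `m` in the variables `X_α`, the symmetric
product `∨` being polynomial multiplication. -/
noncomputable def linPoly {R : Type} [CommRing R] {n k : ℕ} (w : PIdx n k → R) :
    MvPolynomial (PIdx n k) R :=
  ∑ α, MvPolynomial.C (w α) * MvPolynomial.X α

/-- `V₀(m,n,k)`: the linear span of the `m`-th powers `(x₁ ∧ … ∧ x_k)ᵐ` of decomposable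
vectors inside `Sᵐ(Λᵏℝⁿ)` (polynomial model). -/
noncomputable def V0 (m n k : ℕ) : Submodule ℝ (MvPolynomial (PIdx n k) ℝ) :=
  Submodule.span ℝ {p | ∃ x : Fin k → Fin n → ℝ, p = (linPoly (wedgeCoords x)) ^ m}

/-- `l_i(d)`: the number of occurrences of the index `i` among the tuples composing the
canonical basis vector (monomial) with exponent vector `d`. -/
def lcount {n k : ℕ} (d : PIdx n k →₀ ℕ) : Fin n → ℕ :=
  fun i => ∑ α : PIdx n k, if i ∈ α.1 then d α else 0

/-- The chain of type `(k₁,…,k_n) = c`: the set of canonical basis vectors (identified with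
their exponent vectors `d`, with `Σ d = m`) whose occurrence counts are `(l_i)_d = c`. -/
def chain (m n k : ℕ) (c : Fin n → ℕ) : Set (PIdx n k →₀ ℕ) :=
  {d | (∑ α, d α) = m ∧ lcount d = c}

/-- The condition for `(k₁,…,k_n) = c` to be the type of a chain: `Σ kᵢ = mk`,
each `kᵢ ≤ m`, and at least `k` of the `kᵢ` are nonzero. -/
def IsChainType (m n k : ℕ) (c : Fin n → ℕ) : Prop :=
  (∑ i, c i) = m * k ∧ (∀ i, c i ≤ m) ∧ k ≤ (Finset.univ.filter fun i => c i ≠ 0).card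

/-- `L(σ)`: the linear span of the chain of type `c`. -/
noncomputable def Lchain (m n k : ℕ) (c : Fin n → ℕ) :
    Submodule ℝ (MvPolynomial (PIdx n k) ℝ) :=
  Submodule.span ℝ {p | ∃ d ∈ chain m n k c, p = MvPolynomial.monomial d 1}

open Classical in
/-- `Pr(·,σ)`: the orthogonal projection onto `L(σ)` with respect to the inner product
making the canonical basis orthonormal; it keeps exactly the coefficients of the canonical
basis vectors lying in the chain `σ` and kills all the others. -/
noncomputable def projChain (m n k : ℕ) (c : Fin n → ℕ)
    (p : MvPolynomial (PIdx n k) ℝ) : MvPolynomial (PIdx n k) ℝ :=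
  ∑ d ∈ p.support, if d ∈ chain m n k c then MvPolynomial.monomial d (p.coeff d) else 0

/-- The generic decomposable vector `w = x₁ ∧ … ∧ x_k`, where `x_i = Σ_j α_{ij} e_j` with
independent indeterminates `α_{ij}`: its Plücker coordinates are polynomials in the
variables `α_{ij}`, i.e. elements of `ℝ[α_{ij}] = MvPolynomial (Fin k × Fin n) ℝ`. -/
noncomputable def genericWedge (n k : ℕ) : PIdx n k → MvPolynomial (Fin k × Fin n) ℝ :=
  wedgeCoords fun i j => MvPolynomial.X (i, j)

/-- The polynomial `A_s(α_{ij}) = (wᵐ, v_s)`: the inner product of `wᵐ` with the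
canonical basis vector `v_s` (the monomial with exponent vector `d`), i.e. the
coefficient of that monomial in `wᵐ`; it is a homogeneous polynomial of degree `mk`
in the variables `α_{ij}`. -/
noncomputable def Apoly (m n k : ℕ) (d : PIdx n k →₀ ℕ) :
    MvPolynomial (Fin k × Fin n) ℝ :=
  MvPolynomial.coeff d ((linPoly (genericWedge n k)) ^ m)

open MvPolynomial Submodule Module

lemma pair_toDual {ι : Type} [Fintype ι] [DecidableEq ι] (v u : ι → ℝ) :
    (Pi.basisFun ℝ ι).toDual v u = ∑ i, v i * u i := by
  conv_lhs => rw [← (Pi.basisFun ℝ ι).sum_repr v]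
  rw [map_sum, LinearMap.sum_apply]
  simp only [map_smul, LinearMap.smul_apply, Basis.toDual_apply_right, Pi.basisFun_repr,
    smul_eq_mul]

lemma eval_lincomb {ι σs : Type} [Fintype ι] (g : ι → MvPolynomial σs ℝ) (v : ι → ℝ)
    (x : σs → ℝ) :
    eval x (Fintype.linearCombination ℝ g v) = ∑ i, v i * eval x (g i) := by
  rw [Fintype.linearCombination_apply, map_sum]; simp [smul_eq_mul]

lemma core_finrank {ι σs : Type} [Fintype ι] [DecidableEq ι] (g : ι → MvPolynomial σs ℝ) :
    finrank ℝ (span ℝ {u : ι → ℝ | ∃ x : σs → ℝ, u = fun i => eval x (g i)}) =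
      finrank ℝ (span ℝ (Set.range g)) := by
  classical
  set Φ : (ι → ℝ) →ₗ[ℝ] MvPolynomial σs ℝ := Fintype.linearCombination ℝ g with hΦ
  have hrange : LinearMap.range Φ = span ℝ (Set.range g) := Fintype.range_linearCombination ℝ g
  set U : Submodule ℝ (ι → ℝ) := span ℝ {u : ι → ℝ | ∃ x : σs → ℝ, u = fun i => eval x (g i)}
    with hU
  set D := (Pi.basisFun ℝ ι).toDualEquiv with hD
  have hDpair : ∀ (v u : ι → ℝ), D v u = ∑ i, v i * u i := fun v u => pair_toDual v u
  have hmap : Submodule.map (D : (ι → ℝ) →ₗ[ℝ] Module.Dual ℝ (ι → ℝ)) (LinearMap.ker Φ)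
      = U.dualAnnihilator := by
    ext φ
    rw [Submodule.mem_map, Submodule.mem_dualAnnihilator]
    constructor
    · rintro ⟨v, hv, rfl⟩
      rw [LinearMap.mem_ker] at hv
      intro u hu
      have hle : U ≤ LinearMap.ker (D v : Module.Dual ℝ (ι → ℝ)) := by
        rw [hU, Submodule.span_le]
        rintro u ⟨x, rfl⟩
        simp only [SetLike.mem_coe, LinearMap.mem_ker]
        rw [hDpair]
        rw [← eval_lincomb g v x, ← hΦ, hv, map_zero]
      simpa using hle hu
    · intro hφ
      refine ⟨D.symm φ, ?_, by simp⟩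
      rw [LinearMap.mem_ker]
      apply MvPolynomial.funext (q := 0)
      intro x
      have h0 : φ (fun i => eval x (g i)) = 0 := hφ _ (subset_span ⟨x, rfl⟩)
      have h3 : φ (fun i => eval x (g i)) = ∑ i, (D.symm φ) i * eval x (g i) := by
        conv_lhs => rw [← D.apply_symm_apply φ]
        exact hDpair _ _
      rw [map_zero, eval_lincomb, ← h3, h0]
  have e1 : finrank ℝ (LinearMap.range Φ) + finrank ℝ (LinearMap.ker Φ) = finrank ℝ (ι → ℝ) :=
    LinearMap.finrank_range_add_finrank_ker Φ
  have e2 : finrank ℝ U.dualAnnihilator + finrank ℝ U = finrank ℝ (ι → ℝ) := by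
    have := Subspace.finrank_add_finrank_dualCoannihilator_eq U.dualAnnihilator
    rwa [Subspace.dualAnnihilator_dualCoannihilator_eq] at this
  have e3 : finrank ℝ U.dualAnnihilator = finrank ℝ (LinearMap.ker Φ) := by
    rw [← hmap]; exact LinearEquiv.finrank_map_eq D _
  rw [hrange] at e1
  omega


-- column scaling of determinant
lemma wedgeCoords_scale {n k : ℕ} (t : Fin n → ℝ) (x : Fin k → Fin n → ℝ) (α : PIdx n k) :
    wedgeCoords (fun i j => t j * x i j) α = (∏ j ∈ α.1, t j) * wedgeCoords x α := by
  unfold wedgeCoords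
  have h := Matrix.det_mul_row (fun j => t (toTuple α j))
    (Matrix.of fun i j => x i (toTuple α j))
  rw [show (Matrix.of fun i j => t (toTuple α j) * x i (toTuple α j))
      = (Matrix.of fun i j => (fun j' => t (toTuple α j')) j
        * (Matrix.of fun i j => x i (toTuple α j)) i j) from rfl, h]
  congr 1
  rw [← Finset.prod_coe_sort α.1 t]
  exact Equiv.prod_comp (α.1.orderIsoOfFin α.2).toEquiv (fun a => t ↑a)

lemma linPoly_isHomogeneous {n k : ℕ} (w : PIdx n k → ℝ) : (linPoly w).IsHomogeneous 1 := by
  unfold linPoly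
  apply MvPolynomial.IsHomogeneous.sum
  intro α _
  simpa using (MvPolynomial.isHomogeneous_C _ (w α)).mul (MvPolynomial.isHomogeneous_X _ α)

lemma coeff_pow_eq_zero {m n k : ℕ} (w : PIdx n k → ℝ) (d : PIdx n k →₀ ℕ)
    (hd : (∑ α, d α) ≠ m) : MvPolynomial.coeff d ((linPoly w) ^ m) = 0 := by
  have hdeg : d.degree = ∑ α, d α := by
    rw [Finsupp.degree_apply, Finset.sum_subset (Finset.subset_univ d.support)]
    intro x _ hx
    simpa using Finsupp.notMem_support_iff.mp hx
  apply MvPolynomial.IsHomogeneous.coeff_eq_zero ((linPoly_isHomogeneous w).pow m)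
  rw [hdeg]
  simpa using hd

noncomputable def scaleSub {n k : ℕ} (t : Fin n → ℝ) :
    MvPolynomial (PIdx n k) ℝ →ₐ[ℝ] MvPolynomial (PIdx n k) ℝ :=
  MvPolynomial.aeval (fun α : PIdx n k => MvPolynomial.C (∏ j ∈ α.1, t j) * MvPolynomial.X α)

lemma scaleSub_linPoly {n k : ℕ} (t : Fin n → ℝ) (w : PIdx n k → ℝ) :
    scaleSub t (linPoly w) = linPoly (fun α => (∏ j ∈ α.1, t j) * w α) := by
  unfold linPoly scaleSub
  rw [map_sum]
  refine Finset.sum_congr rfl fun α _ => ?_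
  rw [map_mul, MvPolynomial.aeval_C, MvPolynomial.aeval_X, MvPolynomial.algebraMap_eq,
    ← mul_assoc, ← MvPolynomial.C_mul, mul_comm (w α)]

lemma scaleSub_coeff {n k : ℕ} (t : Fin n → ℝ) (p : MvPolynomial (PIdx n k) ℝ)
    (d : PIdx n k →₀ ℕ) :
    MvPolynomial.coeff d (scaleSub t p)
      = (∏ α : PIdx n k, (∏ j ∈ α.1, t j) ^ d α) * MvPolynomial.coeff d p := by
  classical
  induction p using MvPolynomial.induction_on' with
  | monomial d' a =>
    have key : scaleSub t (MvPolynomial.monomial d' a)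
        = MvPolynomial.monomial d' ((∏ α : PIdx n k, (∏ j ∈ α.1, t j) ^ d' α) * a) := by
      unfold scaleSub
      rw [MvPolynomial.aeval_monomial]
      have h1 : (d'.prod fun α e => (MvPolynomial.C (∏ j ∈ α.1, t j) * MvPolynomial.X α) ^ e)
          = MvPolynomial.C (∏ α : PIdx n k, (∏ j ∈ α.1, t j) ^ d' α)
            * d'.prod fun α e => MvPolynomial.X α ^ e := by
        rw [Finsupp.prod_fintype _ _ (by intro i; rw [pow_zero]),
          Finsupp.prod_fintype _ _ (by intro i; rw [pow_zero])]
        calc ∏ i : PIdx n k, (MvPolynomial.C (∏ j ∈ i.1, t j) * MvPolynomial.X i) ^ d' i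
            = ∏ i : PIdx n k,
              (MvPolynomial.C ((∏ j ∈ i.1, t j) ^ d' i) * MvPolynomial.X i ^ d' i) := by
              refine Finset.prod_congr rfl fun α _ => ?_; rw [mul_pow, map_pow]
          _ = (∏ i : PIdx n k, MvPolynomial.C ((∏ j ∈ i.1, t j) ^ d' i))
              * ∏ i : PIdx n k, MvPolynomial.X i ^ d' i := Finset.prod_mul_distrib
          _ = _ := by rw [map_prod]
      rw [h1, MvPolynomial.algebraMap_eq, MvPolynomial.monomial_eq,
        Finsupp.prod_fintype _ _ (by intro i; rw [pow_zero]), MvPolynomial.C_mul]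
      ring
    rw [key, MvPolynomial.coeff_monomial, MvPolynomial.coeff_monomial]
    split_ifs with h
    · subst h; rfl
    · rw [mul_zero]
  | add p q hp hq =>
    rw [map_add, MvPolynomial.coeff_add, MvPolynomial.coeff_add, hp, hq, mul_add]

lemma prod_pow_lcount {n k : ℕ} (t : Fin n → ℝ) (d : PIdx n k →₀ ℕ) :
    (∏ α : PIdx n k, (∏ j ∈ α.1, t j) ^ d α) = ∏ j : Fin n, t j ^ lcount d j := by
  classical
  have h1 : ∀ α : PIdx n k, (∏ j ∈ α.1, t j) ^ d α
      = ∏ j : Fin n, t j ^ (if j ∈ α.1 then d α else 0) := by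
    intro α
    rw [← Finset.prod_pow]
    have h2 : ∏ x ∈ α.1, t x ^ d α = ∏ j : Fin n, (if j ∈ α.1 then t j ^ d α else 1) := by
      rw [Finset.prod_ite_mem, Finset.univ_inter]
    rw [h2]
    refine Finset.prod_congr rfl fun j _ => ?_
    split_ifs with h
    · rfl
    · rw [pow_zero]
  rw [Finset.prod_congr rfl fun α _ => h1 α, Finset.prod_comm]
  apply Finset.prod_congr rfl
  intro j _
  rw [Finset.prod_pow_eq_pow_sum]
  rfl

lemma coeff_pow_scale {m n k : ℕ} (t : Fin n → ℝ) (x : Fin k → Fin n → ℝ) (d : PIdx n k →₀ ℕ) :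
    MvPolynomial.coeff d ((linPoly (wedgeCoords fun i j => t j * x i j)) ^ m)
      = (∏ j : Fin n, t j ^ lcount d j)
        * MvPolynomial.coeff d ((linPoly (wedgeCoords x)) ^ m) := by
  have h1 : linPoly (wedgeCoords fun i j => t j * x i j)
      = scaleSub t (linPoly (wedgeCoords x)) := by
    rw [scaleSub_linPoly]
    unfold linPoly
    refine Finset.sum_congr rfl fun α _ => ?_
    rw [wedgeCoords_scale]
  rw [h1, ← map_pow, scaleSub_coeff, prod_pow_lcount]

/-- evaluation of the weight-monomial -/
lemma eval_weight_monomial {n : ℕ} (ts : Fin n → ℝ) (e : Fin n →₀ ℕ) :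
    MvPolynomial.eval ts (MvPolynomial.monomial e (1 : ℝ)) = ∏ j : Fin n, ts j ^ e j := by
  rw [MvPolynomial.eval_monomial, one_mul, Finsupp.prod_fintype _ _ (by intro i; rw [pow_zero])]

/-- delta-functional from evaluations on a finite set of distinct monomials -/
lemma exists_delta_comb {n : ℕ} (T : Finset (Fin n →₀ ℕ)) (cF : Fin n →₀ ℕ) :
    ∃ (N : ℕ) (pts : Fin N → (Fin n → ℝ)) (lam : Fin N → ℝ),
      ∀ e ∈ T, (∑ s, lam s * ∏ j : Fin n, pts s j ^ e j) = if e = cF then 1 else 0 := by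
  classical
  set g : {e // e ∈ T} → MvPolynomial (Fin n) ℝ := fun e => MvPolynomial.monomial e.1 1 with hg
  set S : Set ({e // e ∈ T} → ℝ) :=
    {u | ∃ x : Fin n → ℝ, u = fun i => MvPolynomial.eval x (g i)} with hS
  set μ : {e // e ∈ T} → ℝ := fun e => if e.1 = cF then 1 else 0 with hμ
  have hμmem : μ ∈ span ℝ S := by
    rw [← Subspace.forall_mem_dualAnnihilator_apply_eq_zero_iff]
    intro φ hφ
    set v := (Pi.basisFun ℝ {e // e ∈ T}).toDualEquiv.symm φ with hv
    have hφv : φ = (Pi.basisFun ℝ {e // e ∈ T}).toDualEquiv v := by rw [hv]; simp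
    have hvz : ∀ i, v i = 0 := by
      have hrel : (∑ i, v i • g i) = 0 := by
        apply MvPolynomial.funext (q := 0)
        intro x
        have hcol : (fun i => MvPolynomial.eval x (g i)) ∈ span ℝ S :=
          subset_span ⟨x, rfl⟩
        have h0 : φ (fun i => MvPolynomial.eval x (g i)) = 0 :=
          (Submodule.mem_dualAnnihilator φ).mp hφ _ hcol
        rw [map_zero, map_sum]
        rw [hφv] at h0
        have := pair_toDual v (fun i => MvPolynomial.eval x (g i))
        rw [show ((Pi.basisFun ℝ {e // e ∈ T}).toDualEquiv v) = (Pi.basisFun ℝ _).toDual v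
          from rfl, this] at h0
        rw [← h0]
        refine Finset.sum_congr rfl fun i _ => ?_
        rw [MvPolynomial.smul_eq_C_mul, map_mul, MvPolynomial.eval_C]
      intro i
      have h := congrArg (MvPolynomial.coeff i.1) hrel
      rw [MvPolynomial.coeff_zero, MvPolynomial.coeff_sum] at h
      have h2 : ∀ e : {e // e ∈ T}, MvPolynomial.coeff i.1 (v e • g e)
          = if e = i then v e else 0 := by
        intro e
        rw [hg]
        simp only
        rw [MvPolynomial.coeff_smul, MvPolynomial.coeff_monomial]
        by_cases he : e = i
        · subst he; simp
        · rw [if_neg he, if_neg (fun hh => he (Subtype.ext hh)), smul_zero]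
      rw [Finset.sum_congr rfl fun e _ => h2 e, Finset.sum_ite_eq'] at h
      simpa using h
    rw [hφv, show ((Pi.basisFun ℝ {e // e ∈ T}).toDualEquiv v) = (Pi.basisFun ℝ _).toDual v
      from rfl, pair_toDual]
    simp [hvz]
  rw [mem_span_set'] at hμmem
  obtain ⟨N, f, gg, hsum⟩ := hμmem
  choose xs hxs using fun i => (gg i).2
  refine ⟨N, xs, f, ?_⟩
  intro e he
  have := congrFun hsum ⟨e, he⟩
  rw [Finset.sum_apply] at this
  rw [hμ] at this
  simp only at this
  rw [← this]
  refine Finset.sum_congr rfl fun s _ => ?_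
  have : (gg s : {e // e ∈ T} → ℝ) = fun i => MvPolynomial.eval (xs s) (g i) := hxs s
  rw [Pi.smul_apply, this, smul_eq_mul, hg]
  simp only
  rw [eval_weight_monomial]

lemma chain_finite (m n k : ℕ) (c : Fin n → ℕ) : (chain m n k c).Finite := by
  classical
  apply Set.Finite.subset
    (Finset.Iic (Finsupp.equivFunOnFinite.symm fun _ : PIdx n k => m)).finite_toSet
  intro d hd
  simp only [Finset.coe_Iic, Set.mem_Iic]
  rw [Finsupp.le_iff]
  intro α _
  have h1 : d α ≤ ∑ β, d β :=
    Finset.single_le_sum (fun i _ => Nat.zero_le _) (Finset.mem_univ α)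
  have h2 := hd.1
  simpa [h2] using h1

lemma proj_mem_V0 (m n k : ℕ) (c : Fin n → ℕ) (x : Fin k → Fin n → ℝ) :
    (∑ d ∈ (chain_finite m n k c).toFinset,
      MvPolynomial.monomial d (MvPolynomial.coeff d ((linPoly (wedgeCoords x)) ^ m)))
      ∈ V0 m n k := by
  classical
  set P := (linPoly (wedgeCoords x)) ^ m with hP
  set cF : Fin n →₀ ℕ := Finsupp.equivFunOnFinite.symm c with hcF
  set lF : (PIdx n k →₀ ℕ) → (Fin n →₀ ℕ) := fun d => Finsupp.equivFunOnFinite.symm (lcount d)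
    with hlF
  set T : Finset (Fin n →₀ ℕ) := insert cF (P.support.image lF) with hT
  obtain ⟨N, pts, lam, hdelta⟩ := exists_delta_comb T cF
  have key : (∑ d ∈ (chain_finite m n k c).toFinset,
        MvPolynomial.monomial d (MvPolynomial.coeff d P))
      = ∑ s, lam s • (linPoly (wedgeCoords fun i j => pts s j * x i j)) ^ m := by
    apply MvPolynomial.ext
    intro d
    rw [MvPolynomial.coeff_sum, MvPolynomial.coeff_sum]
    have hL : (∑ d' ∈ (chain_finite m n k c).toFinset,
        MvPolynomial.coeff d (MvPolynomial.monomial d' (MvPolynomial.coeff d' P)))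
        = if d ∈ (chain_finite m n k c).toFinset then MvPolynomial.coeff d P else 0 := by
      rw [Finset.sum_congr rfl fun d' _ => MvPolynomial.coeff_monomial d d' _]
      exact Finset.sum_ite_eq' _ _ _
    have hR : (∑ s, MvPolynomial.coeff d
        (lam s • (linPoly (wedgeCoords fun i j => pts s j * x i j)) ^ m))
        = (∑ s, lam s * ∏ j : Fin n, pts s j ^ lcount d j) * MvPolynomial.coeff d P := by
      rw [Finset.sum_mul]
      refine Finset.sum_congr rfl fun s _ => ?_
      rw [MvPolynomial.coeff_smul, coeff_pow_scale, smul_eq_mul, ← hP, mul_assoc]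
    rw [hL, hR]
    by_cases hc0 : MvPolynomial.coeff d P = 0
    · rw [hc0, mul_zero, ite_self]
    · have hdsupp : d ∈ P.support := by rwa [MvPolynomial.mem_support_iff]
      have hTmem : lF d ∈ T := by
        rw [hT]; exact Finset.mem_insert_of_mem (Finset.mem_image_of_mem lF hdsupp)
      have hpow : ∀ s, (∏ j : Fin n, pts s j ^ lcount d j)
          = ∏ j : Fin n, pts s j ^ (lF d) j := by
        intro s; refine Finset.prod_congr rfl fun j _ => ?_
        rw [hlF]; simp
      have hdel := hdelta (lF d) hTmem
      rw [Finset.sum_congr rfl fun s _ => by rw [hpow s], hdel]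
      have hsum : (∑ α, d α) = m := by
        by_contra hne
        exact hc0 (coeff_pow_eq_zero _ d hne)
      have hiff : (d ∈ (chain_finite m n k c).toFinset) ↔ lF d = cF := by
        rw [Set.Finite.mem_toFinset]
        unfold chain
        constructor
        · rintro ⟨-, h2⟩
          simp only [hlF, hcF, h2]
        · intro h
          refine ⟨hsum, ?_⟩
          have h3 : Finsupp.equivFunOnFinite.symm (lcount d)
              = Finsupp.equivFunOnFinite.symm c := h
          have := congrArg (⇑Finsupp.equivFunOnFinite) h3
          simpa using this
      by_cases hlc : lF d = cF
      · rw [if_pos hlc, if_pos (hiff.mpr hlc), one_mul]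
      · rw [if_neg hlc, if_neg (fun hh => hlc (hiff.mp hh)), zero_mul]
  rw [key]
  apply Submodule.sum_mem
  intro s _
  apply Submodule.smul_mem
  exact subset_span ⟨fun i j => pts s j * x i j, rfl⟩

lemma eval_genericWedge {n k : ℕ} (x : Fin k → Fin n → ℝ) (α : PIdx n k) :
    MvPolynomial.eval (fun p : Fin k × Fin n => x p.1 p.2) (genericWedge n k α)
      = wedgeCoords x α := by
  unfold genericWedge wedgeCoords
  rw [RingHom.map_det]
  congr 1
  ext i j
  simp [Matrix.map_apply]

lemma linPoly_wedge_eq_map {n k : ℕ} (x : Fin k → Fin n → ℝ) :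
    linPoly (wedgeCoords x)
      = MvPolynomial.map (MvPolynomial.eval fun p : Fin k × Fin n => x p.1 p.2)
          (linPoly (genericWedge n k)) := by
  unfold linPoly
  rw [map_sum]
  refine Finset.sum_congr rfl fun α _ => ?_
  rw [map_mul, MvPolynomial.map_C, MvPolynomial.map_X, eval_genericWedge]

lemma coeff_gen_eval {m n k : ℕ} (x : Fin k → Fin n → ℝ) (d : PIdx n k →₀ ℕ) :
    MvPolynomial.coeff d ((linPoly (wedgeCoords x)) ^ m)
      = MvPolynomial.eval (fun p : Fin k × Fin n => x p.1 p.2) (Apoly m n k d) := by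
  rw [linPoly_wedge_eq_map, ← _root_.map_pow, MvPolynomial.coeff_map]
  rfl

/-- **Theorem 4.** For every chain `σ = {v₁,…,v_t}` of type `c`,
`dim (V₀(m,n,k) ∩ L(σ)) = r(σ)`, where `r(σ)` is the maximal number of linearly
independent polynomials among `A₁,…,A_t`, i.e. the dimension of their ℝ-linear span. -/
theorem dim_V0_inter_Lchain (m n k : ℕ) (hm : 1 ≤ m) (hk : 1 ≤ k) (hkn : k ≤ n)
    (c : Fin n → ℕ) (hc : IsChainType m n k c) :
    Module.finrank ℝ ↥(V0 m n k ⊓ Lchain m n k c) =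
      Module.finrank ℝ ↥(Submodule.span ℝ (Apoly m n k '' chain m n k c)) := by
  classical
  have hfin := chain_finite m n k c
  set E : Finset (PIdx n k →₀ ℕ) := hfin.toFinset with hE
  have hEc : (E : Set (PIdx n k →₀ ℕ)) = chain m n k c := hfin.coe_toFinset
  set π : MvPolynomial (PIdx n k) ℝ →ₗ[ℝ] ({d // d ∈ E} → ℝ) :=
    LinearMap.pi (fun d : {d // d ∈ E} => MvPolynomial.lcoeff ℝ d.1) with hπ
  have hπapp : ∀ (p : MvPolynomial (PIdx n k) ℝ) (d : {d // d ∈ E}),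
      π p d = MvPolynomial.coeff d.1 p := fun p d => rfl
  -- (a) elements of Lchain vanish outside the chain
  have hLcoeff : ∀ p ∈ Lchain m n k c, ∀ d, d ∉ chain m n k c → MvPolynomial.coeff d p = 0 := by
    intro p hp
    refine Submodule.span_induction ?_ ?_ ?_ ?_ hp
    · rintro q ⟨d', hd', rfl⟩ d hd
      rw [MvPolynomial.coeff_monomial]
      exact if_neg (by rintro rfl; exact hd hd')
    · intro d _; exact MvPolynomial.coeff_zero d
    · intro q r _ _ hq hr d hd
      rw [MvPolynomial.coeff_add, hq d hd, hr d hd, add_zero]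
    · intro a q _ hq d hd
      rw [MvPolynomial.coeff_smul, hq d hd, smul_zero]
  -- (b) finite dimensionality
  have hLfin : FiniteDimensional ℝ (Lchain m n k c) := by
    have hset : Lchain m n k c
        = span ℝ ((fun d => (MvPolynomial.monomial d (1:ℝ))) '' chain m n k c) := by
      unfold Lchain
      congr 1
      ext p; constructor
      · rintro ⟨d, hd, rfl⟩; exact ⟨d, hd, rfl⟩
      · rintro ⟨d, hd, rfl⟩; exact ⟨d, hd, rfl⟩
    rw [hset]
    exact FiniteDimensional.span_of_finite ℝ (hfin.image _)
  have hVLfin : FiniteDimensional ℝ ↥(V0 m n k ⊓ Lchain m n k c) :=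
    Submodule.finiteDimensional_of_le inf_le_right
  -- (c) finrank inf = finrank of image under π
  have hc1 : Module.finrank ℝ ↥(V0 m n k ⊓ Lchain m n k c)
      = Module.finrank ℝ ↥(Submodule.map π (V0 m n k ⊓ Lchain m n k c)) := by
    set f := π ∘ₗ (V0 m n k ⊓ Lchain m n k c).subtype with hf
    have hinj : Function.Injective f := by
      rw [← LinearMap.ker_eq_bot]
      rw [Submodule.eq_bot_iff]
      rintro ⟨p, hp⟩ hker
      rw [LinearMap.mem_ker] at hker
      have hzero : p = 0 := by
        apply MvPolynomial.ext
        intro d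
        rw [MvPolynomial.coeff_zero]
        by_cases hd : d ∈ chain m n k c
        · have hdE : d ∈ E := hfin.mem_toFinset.mpr hd
          have := congrFun hker ⟨d, hdE⟩
          simpa [hf, hπapp] using this
        · exact hLcoeff p hp.2 d hd
      exact Subtype.ext hzero
    have h1 := LinearMap.finrank_range_of_inj hinj
    have h2 : LinearMap.range f = Submodule.map π (V0 m n k ⊓ Lchain m n k c) := by
      rw [hf, LinearMap.range_comp, Submodule.range_subtype]
    rw [← h2, h1]
  -- (d) map π inf = map π V0
  have hd1 : Submodule.map π (V0 m n k ⊓ Lchain m n k c) = Submodule.map π (V0 m n k) := by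
    refine le_antisymm (Submodule.map_mono inf_le_left) ?_
    rintro _ ⟨p, hp, rfl⟩
    set Q : MvPolynomial (PIdx n k) ℝ →ₗ[ℝ] MvPolynomial (PIdx n k) ℝ :=
      ∑ d ∈ E, (MvPolynomial.monomial d) ∘ₗ (MvPolynomial.lcoeff ℝ d) with hQ
    have hQ1 : ∀ q, Q q = ∑ d ∈ E, MvPolynomial.monomial d (MvPolynomial.coeff d q) := by
      intro q
      rw [hQ, LinearMap.sum_apply]
      rfl
    have hQV : Q p ∈ V0 m n k := by
      refine Submodule.span_induction ?_ ?_ ?_ ?_ hp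
      · rintro q ⟨x, rfl⟩
        rw [hQ1]
        exact proj_mem_V0 m n k c x
      · rw [map_zero]; exact Submodule.zero_mem _
      · intro q r _ _ hq hr; rw [map_add]; exact Submodule.add_mem _ hq hr
      · intro a q _ hq; rw [map_smul]; exact Submodule.smul_mem _ a hq
    have hQL : Q p ∈ Lchain m n k c := by
      rw [hQ1]
      apply Submodule.sum_mem
      intro d hd
      have : MvPolynomial.monomial d (MvPolynomial.coeff d p)
          = (MvPolynomial.coeff d p) • MvPolynomial.monomial d (1:ℝ) := by
        rw [MvPolynomial.smul_monomial, smul_eq_mul, mul_one]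
      rw [this]
      exact Submodule.smul_mem _ _ (subset_span ⟨d, hfin.mem_toFinset.mp hd, rfl⟩)
    have hQπ : π (Q p) = π p := by
      funext d
      rw [hπapp, hπapp, hQ1, MvPolynomial.coeff_sum,
        Finset.sum_congr rfl fun d' _ => MvPolynomial.coeff_monomial d.1 d' _,
        Finset.sum_ite_eq' E d.1, if_pos d.2]
    exact ⟨Q p, ⟨hQV, hQL⟩, hQπ⟩
  -- (e) map π V0 = span of evaluation columns
  have he1 : Submodule.map π (V0 m n k)
      = span ℝ {u : {d // d ∈ E} → ℝ | ∃ y : (Fin k × Fin n) → ℝ,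
          u = fun d => MvPolynomial.eval y (Apoly m n k d.1)} := by
    rw [V0, Submodule.map_span]
    congr 1
    ext u
    constructor
    · rintro ⟨q, ⟨x, rfl⟩, rfl⟩
      refine ⟨fun p => x p.1 p.2, ?_⟩
      funext d
      rw [hπapp, coeff_gen_eval]
    · rintro ⟨y, rfl⟩
      refine ⟨(linPoly (wedgeCoords fun i j => y (i, j))) ^ m, ⟨fun i j => y (i, j), rfl⟩, ?_⟩
      funext d
      rw [hπapp, coeff_gen_eval]
  -- (f) core
  have hf1 : Module.finrank ℝ (span ℝ {u : {d // d ∈ E} → ℝ | ∃ y : (Fin k × Fin n) → ℝ,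
        u = fun d => MvPolynomial.eval y (Apoly m n k d.1)})
      = Module.finrank ℝ (span ℝ (Set.range fun d : {d // d ∈ E} => Apoly m n k d.1)) :=
    core_finrank _
  have hf2 : (Set.range fun d : {d // d ∈ E} => Apoly m n k d.1)
      = Apoly m n k '' chain m n k c := by
    ext q
    constructor
    · rintro ⟨d, rfl⟩
      exact ⟨d.1, hfin.mem_toFinset.mp d.2, rfl⟩
    · rintro ⟨d, hd, rfl⟩
      exact ⟨⟨d, hfin.mem_toFinset.mpr hd⟩, rfl⟩
  rw [hc1, hd1, he1, hf1, hf2]
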